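/- arXiv:1105.2137 — 2 statements merged into one kernel-verified Lean document; each statement's English description precedes it below -/
import Mathlib

section
/- Strong law of large numbers for renewal processes: let J_1, J_2, … be i.i.d. positive random variables with finite mean μ = E[J_1] < ∞, T_n = Σ_{i=1}^n J_i, and N(t) = max{n : T_n ≤ t}. Then N(t)/t → 1/μ almost surely as t → ∞. -/
open MeasureTheory ProbabilityTheory Filter
open scoped ProbabilityTheory ENNReal

/-- The epoch `T_n = ∑_{i=1}^n J_i` (with `T_0 = 0`); here `J i` stands for `J_{i+1}`. -/
noncomputable def epoch {Ω : Type*} (J : ℕ → Ω → ℝ) (n : ℕ) (ω : Ω) : ℝ :=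
  ∑ i ∈ Finset.range n, J i ω

/-- The counting process `N(t) = max {n : T_n ≤ t}` (valued in `ℕ∞`). -/
noncomputable def countingProcess {Ω : Type*} (J : ℕ → Ω → ℝ) (t : ℝ) (ω : Ω) : ℕ∞ :=
  ⨆ (n : ℕ) (_ : epoch J n ω ≤ t), (n : ℕ∞)

lemma renewal_det (f : ℕ → ℝ) (hf0 : f 0 = 0) (hsm : StrictMono f) (μ : ℝ) (hμ : 0 < μ)
    (hlim : Tendsto (fun n : ℕ => f n / n) atTop (nhds μ)) :
    Tendsto (fun t : ℝ =>
      (((⨆ (n : ℕ) (_ : f n ≤ t), (n : ℕ∞)) : ℕ∞) : ℝ≥0∞).toReal / t)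
      atTop (nhds (1 / μ)) := by
  have hfpos : ∀ n : ℕ, 1 ≤ n → 0 < f n := fun n hn => hf0 ▸ hsm (by omega)
  -- f tends to atTop
  have hf_top : Tendsto f atTop atTop := by
    have h1 : Tendsto (fun n : ℕ => (f n / n) * n) atTop atTop :=
      Tendsto.pos_mul_atTop hμ hlim tendsto_natCast_atTop_atTop
    apply h1.congr'
    filter_upwards [eventually_ge_atTop 1] with n hn
    field_simp
  have hbdd : ∀ t : ℝ, BddAbove {n : ℕ | f n ≤ t} := by
    intro t
    obtain ⟨m, hm⟩ := (tendsto_atTop.mp hf_top (t + 1)).exists_forall_of_atTop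
    refine ⟨m, fun n hn => ?_⟩
    by_contra h
    have := hm n (by omega)
    simp only [Set.mem_setOf_eq] at hn
    linarith
  set N : ℝ → ℕ := fun t => sSup {n : ℕ | f n ≤ t} with hN
  have hne : ∀ t : ℝ, 0 ≤ t → {n : ℕ | f n ≤ t}.Nonempty := fun t ht => ⟨0, by simp [hf0, ht]⟩
  have hNmem : ∀ t : ℝ, 0 ≤ t → f (N t) ≤ t := fun t ht => Nat.sSup_mem (hne t ht) (hbdd t)
  have hNsucc : ∀ t : ℝ, 0 ≤ t → t < f (N t + 1) := by
    intro t ht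
    by_contra h
    push_neg at h
    have : N t + 1 ≤ N t := le_csSup (hbdd t) h
    omega
  have hsup_eq : ∀ t : ℝ, 0 ≤ t → (⨆ (n : ℕ) (_ : f n ≤ t), (n : ℕ∞)) = (N t : ℕ∞) := by
    intro t ht
    refine le_antisymm (iSup₂_le fun n hn => Nat.cast_le.mpr (le_csSup (hbdd t) hn)) ?_
    exact le_iSup₂ (f := fun (n : ℕ) (_ : f n ≤ t) => (n : ℕ∞)) (N t) (hNmem t ht)
  have hN_top : Tendsto N atTop atTop := by
    refine tendsto_atTop.2 fun m => ?_
    filter_upwards [eventually_ge_atTop (max (f m) 0)] with t ht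
    exact le_csSup (hbdd t) (le_trans (le_max_left _ _) ht)
  -- the two comparison sequences
  have hg : Tendsto (fun n : ℕ => (n : ℝ) / f n) atTop (nhds (1 / μ)) := by
    rw [one_div]
    apply (hlim.inv₀ hμ.ne').congr'
    filter_upwards [eventually_ge_atTop 1] with n hn
    rw [inv_div]
  have hh : Tendsto (fun n : ℕ => (n : ℝ) / f (n + 1)) atTop (nhds (1 / μ)) := by
    have h1 : Tendsto (fun n : ℕ => ((n + 1 : ℕ) : ℝ) / f (n + 1) * ((n : ℝ) / ((n : ℝ) + 1)))
        atTop (nhds (1 / μ * 1)) :=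
      (hg.comp (tendsto_add_atTop_nat 1)).mul (tendsto_natCast_div_add_atTop (1 : ℝ))
    rw [mul_one] at h1
    apply h1.congr
    intro n
    have hfne : f (n + 1) ≠ 0 := (hfpos (n + 1) (by omega)).ne'
    have hn1 : ((n : ℝ) + 1) ≠ 0 := by positivity
    push_cast
    field_simp
  -- reduce to N t / t
  have key : Tendsto (fun t : ℝ => (N t : ℝ) / t) atTop (nhds (1 / μ)) := by
    apply tendsto_of_tendsto_of_tendsto_of_le_of_le' (hh.comp hN_top) (hg.comp hN_top)
    · filter_upwards [eventually_ge_atTop (max 1 (f 1))] with t ht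
      have ht1 : (1 : ℝ) ≤ t := le_trans (le_max_left _ _) ht
      have ht0 : (0 : ℝ) < t := by linarith
      exact div_le_div_of_nonneg_left (Nat.cast_nonneg _) ht0 (hNsucc t ht0.le).le
    · filter_upwards [eventually_ge_atTop (max 1 (f 1))] with t ht
      have ht1 : (1 : ℝ) ≤ t := le_trans (le_max_left _ _) ht
      have ht0 : (0 : ℝ) < t := by linarith
      have hN1 : 1 ≤ N t := le_csSup (hbdd t) (le_trans (le_max_right _ _) ht)
      exact div_le_div_of_nonneg_left (Nat.cast_nonneg _) (hfpos _ hN1) (hNmem t ht0.le)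
  apply key.congr'
  filter_upwards [eventually_ge_atTop (0 : ℝ)] with t ht
  rw [hsup_eq t ht]
  simp

/-- Strong law of large numbers for renewal processes: if `J_1, J_2, …` are i.i.d.
strictly positive integrable random variables with mean `μ = E[J_1] ∈ (0,∞)`, then
`N(t)/t → 1/μ` almost surely as `t → ∞`. -/
theorem renewal_strong_law {Ω : Type*} [MeasureSpace Ω]
    [IsProbabilityMeasure (ℙ : Measure Ω)]
    (J : ℕ → Ω → ℝ)
    (hmeas : ∀ i, Measurable (J i))
    (hindep : iIndepFun J ℙ)
    (hident : ∀ i, IdentDistrib (J i) (J 0) ℙ ℙ)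
    (hpos : ∀ i ω, 0 < J i ω)
    (hint : Integrable (J 0) ℙ)
    (μ : ℝ) (hμ : μ = ∫ ω, J 0 ω ∂ℙ) (hμ_pos : 0 < μ) :
    ∀ᵐ ω ∂ℙ, Tendsto (fun t : ℝ => ((countingProcess J t ω : ℝ≥0∞)).toReal / t)
      atTop (nhds (1 / μ)) := by
  have hpair : Pairwise (Function.onFun (IndepFun · · ℙ) J) := fun i j hij => hindep.indepFun hij
  filter_upwards [strong_law_ae_real J hint hpair hident] with ω hω
  have hf0 : epoch J 0 ω = 0 := by simp [epoch]
  have hsm : StrictMono (fun n => epoch J n ω) := by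
    apply strictMono_nat_of_lt_succ
    intro n
    simp only [epoch, Finset.sum_range_succ]
    exact lt_add_of_pos_right _ (hpos n ω)
  have := renewal_det (fun n => epoch J n ω) hf0 hsm μ hμ_pos (by rw [hμ]; exact hω)
  simpa [countingProcess] using this
end

section
/- Elementary renewal theorem: let J_1, J_2, … be i.i.d. positive random variables with finite mean μ = E[J_1] < ∞, T_n = Σ_{i=1}^n J_i, N(t) = max{n : T_n ≤ t}, and H(t) = E[N(t)]. Then H(t)/t → 1/μ as t → ∞. -/
open MeasureTheory ProbabilityTheory Filter
open scoped ProbabilityTheory ENNReal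

/-- The renewal function `H(t) = E[N(t)]`. -/
noncomputable def renewalFunction {Ω : Type*} [MeasureSpace Ω] (J : ℕ → Ω → ℝ) (t : ℝ) : ℝ :=
  (∫⁻ ω, (countingProcess J t ω : ℝ≥0∞) ∂ℙ).toReal

section Helpers

variable {Ω : Type*} [MeasureSpace Ω]

lemma epoch_monotone {K : ℕ → Ω → ℝ} (hK : ∀ i ω, 0 ≤ K i ω) (ω : Ω) :
    Monotone fun n => epoch K n ω := fun m n hmn =>
  Finset.sum_le_sum_of_subset_of_nonneg (Finset.range_subset_range.2 hmn)
    (fun i _ _ => hK i ω)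

lemma epoch_measurable (K : ℕ → Ω → ℝ) (hK : ∀ i, Measurable (K i)) (n : ℕ) :
    Measurable (fun ω => epoch K n ω) := by
  unfold epoch; exact Finset.measurable_sum _ fun i _ => hK i

/-- In the "finite" case, the set of admissible `n` is an initial segment. -/
lemma exists_seg {K : ℕ → Ω → ℝ} (hK : ∀ i ω, 0 ≤ K i ω) {ω : Ω} {t : ℝ} (ht : 0 ≤ t)
    (h : ∃ n, ¬ epoch K n ω ≤ t) : ∃ m : ℕ, ∀ n, epoch K n ω ≤ t ↔ n ≤ m := by
  classical
  have h0 : epoch K 0 ω ≤ t := by simpa [epoch] using ht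
  obtain ⟨k, hks, hkm⟩ : ∃ k : ℕ, (¬ epoch K k ω ≤ t) ∧ ∀ n < k, epoch K n ω ≤ t :=
    ⟨Nat.find h, Nat.find_spec h, fun n hn => not_not.mp (Nat.find_min h hn)⟩
  have hk0 : k ≠ 0 := by rintro rfl; exact hks h0
  refine ⟨k - 1, fun n => ?_⟩
  constructor
  · intro hn
    by_contra hcon
    push_neg at hcon
    have hle : k ≤ n := by omega
    exact hks (le_trans (epoch_monotone hK ω hle) hn)
  · intro hn
    exact hkm n (by omega)

lemma countingProcess_eq_of_seg {K : ℕ → Ω → ℝ} {ω : Ω} {t : ℝ} {m : ℕ}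
    (hm : ∀ n, epoch K n ω ≤ t ↔ n ≤ m) : countingProcess K t ω = m := by
  unfold countingProcess
  apply le_antisymm
  · exact iSup₂_le fun n hn => by exact_mod_cast Nat.cast_le.2 ((hm n).1 hn)
  · exact le_iSup₂ (f := fun (n : ℕ) (_ : epoch K n ω ≤ t) => (n : ℕ∞)) m ((hm m).2 le_rfl)

lemma countingProcess_eq_top {K : ℕ → Ω → ℝ} {ω : Ω} {t : ℝ}
    (h : ∀ n, epoch K n ω ≤ t) : countingProcess K t ω = ⊤ := by
  unfold countingProcess
  rw [eq_top_iff]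
  rw [← ENat.iSup_natCast]
  exact iSup_le fun n => le_iSup₂ (f := fun (n : ℕ) (_ : epoch K n ω ≤ t) => (n : ℕ∞)) n (h n)

end Helpers

section Helpers2

variable {Ω : Type*} [MeasureSpace Ω]

/-- Pointwise: `N(t) + 1` equals the sum of the indicators of `{T_i ≤ t}`. -/
lemma counting_add_one {K : ℕ → Ω → ℝ} (hK : ∀ i ω, 0 ≤ K i ω) {t : ℝ} (ht : 0 ≤ t) (ω : Ω) :
    (countingProcess K t ω : ℝ≥0∞) + 1
      = ∑' i : ℕ, Set.indicator {ω' | epoch K i ω' ≤ t} (fun _ => (1 : ℝ≥0∞)) ω := by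
  by_cases h : ∃ n, ¬ epoch K n ω ≤ t
  · obtain ⟨m, hm⟩ := exists_seg hK ht h
    rw [countingProcess_eq_of_seg hm]
    have : ∀ i : ℕ, Set.indicator {ω' | epoch K i ω' ≤ t} (fun _ => (1 : ℝ≥0∞)) ω
        = if i ≤ m then 1 else 0 := by
      intro i
      by_cases hi : i ≤ m
      · rw [if_pos hi, Set.indicator_of_mem (by simpa [Set.mem_setOf_eq] using (hm i).2 hi)]
      · rw [if_neg hi, Set.indicator_of_notMem (by simpa [Set.mem_setOf_eq, hm i] using hi)]
    rw [tsum_congr this, tsum_eq_sum (s := Finset.range (m + 1))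
      (fun i hi => if_neg (by simpa [Nat.lt_succ_iff] using Finset.mem_range.not.mp hi))]
    rw [Finset.sum_congr rfl
      (fun i hi => if_pos (Nat.lt_succ_iff.mp (Finset.mem_range.mp hi)))]
    simp [ENat.toENNReal_coe]
  · push_neg at h
    rw [countingProcess_eq_top h]
    have : ∀ i : ℕ, Set.indicator {ω' | epoch K i ω' ≤ t} (fun _ => (1 : ℝ≥0∞)) ω = 1 :=
      fun i => Set.indicator_of_mem (by simpa [Set.mem_setOf_eq] using h i) _
    rw [tsum_congr this, ENNReal.tsum_const_eq_top_of_ne_zero one_ne_zero]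
    simp

end Helpers2

section Helpers3

variable {Ω : Type*} [MeasureSpace Ω]

lemma indicator_measurable {K : ℕ → Ω → ℝ} (hKm : ∀ i, Measurable (K i)) (t : ℝ) (i : ℕ) :
    Measurable (Set.indicator {ω' | epoch K i ω' ≤ t} (fun _ => (1 : ℝ≥0∞))) :=
  measurable_const.indicator (measurableSet_le (epoch_measurable K hKm i) measurable_const)

lemma counting_measurable {K : ℕ → Ω → ℝ} (hKm : ∀ i, Measurable (K i))
    (hK : ∀ i ω, 0 ≤ K i ω) {t : ℝ} (ht : 0 ≤ t) :
    Measurable (fun ω => (countingProcess K t ω : ℝ≥0∞)) := by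
  have : (fun ω => (countingProcess K t ω : ℝ≥0∞))
      = fun ω => (∑' i : ℕ, Set.indicator {ω' | epoch K i ω' ≤ t} (fun _ => (1 : ℝ≥0∞)) ω) - 1 := by
    funext ω
    rw [← counting_add_one hK ht ω, ENNReal.add_sub_cancel_right ENNReal.one_ne_top]
  rw [this]
  exact (Measurable.ennreal_tsum fun i => indicator_measurable hKm t i).sub measurable_const

variable [IsProbabilityMeasure (ℙ : Measure Ω)]

lemma lintegral_counting {K : ℕ → Ω → ℝ} (hKm : ∀ i, Measurable (K i))
    (hK : ∀ i ω, 0 ≤ K i ω) {t : ℝ} (ht : 0 ≤ t) :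
    (∫⁻ ω, (countingProcess K t ω : ℝ≥0∞) ∂ℙ) + 1
      = ∑' i : ℕ, ℙ {ω | epoch K i ω ≤ t} := by
  have h1 : (∫⁻ ω, (countingProcess K t ω : ℝ≥0∞) ∂ℙ) + 1
      = ∫⁻ ω, ((countingProcess K t ω : ℝ≥0∞) + 1) ∂ℙ := by
    rw [lintegral_add_right _ measurable_const, lintegral_one, measure_univ]
  rw [h1, lintegral_congr (counting_add_one hK ht),
    lintegral_tsum (fun i => (indicator_measurable hKm t i).aemeasurable)]
  congr 1
  funext i
  rw [lintegral_indicator (measurableSet_le (epoch_measurable K hKm i) measurable_const),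
    setLIntegral_one]

end Helpers3

section Helpers4

variable {Ω : Type*} [MeasureSpace Ω]

/-- The compensated sum `∑_i J_i 1_{T_i ≤ t}` equals `T_{m+1}` when the segment is `[0,m]`. -/
lemma W_eq_of_seg {K : ℕ → Ω → ℝ} (hK : ∀ i ω, 0 ≤ K i ω) {ω : Ω} {t : ℝ} {m : ℕ}
    (hm : ∀ n, epoch K n ω ≤ t ↔ n ≤ m) :
    ∑' i : ℕ, ENNReal.ofReal (K i ω)
        * Set.indicator {ω' | epoch K i ω' ≤ t} (fun _ => (1 : ℝ≥0∞)) ω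
      = ENNReal.ofReal (epoch K (m + 1) ω) := by
  have hterm : ∀ i : ℕ, ENNReal.ofReal (K i ω)
      * Set.indicator {ω' | epoch K i ω' ≤ t} (fun _ => (1 : ℝ≥0∞)) ω
      = if i ≤ m then ENNReal.ofReal (K i ω) else 0 := by
    intro i
    by_cases hi : i ≤ m
    · rw [if_pos hi, Set.indicator_of_mem (by simpa [Set.mem_setOf_eq] using (hm i).2 hi), mul_one]
    · rw [if_neg hi, Set.indicator_of_notMem (by simpa [Set.mem_setOf_eq, hm i] using hi),
        mul_zero]
  rw [tsum_congr hterm, tsum_eq_sum (s := Finset.range (m + 1))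
      (fun i hi => if_neg (by simpa [Nat.lt_succ_iff] using Finset.mem_range.not.mp hi)),
    Finset.sum_congr rfl (fun i hi => if_pos (Nat.lt_succ_iff.mp (Finset.mem_range.mp hi))),
    ← ENNReal.ofReal_sum_of_nonneg (fun i _ => hK i ω)]
  rfl

lemma W_le_of_all {K : ℕ → Ω → ℝ} (hK : ∀ i ω, 0 ≤ K i ω) {ω : Ω} {t : ℝ}
    (h : ∀ n, epoch K n ω ≤ t) :
    ∑' i : ℕ, ENNReal.ofReal (K i ω)
        * Set.indicator {ω' | epoch K i ω' ≤ t} (fun _ => (1 : ℝ≥0∞)) ω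
      ≤ ENNReal.ofReal t := by
  calc ∑' i : ℕ, ENNReal.ofReal (K i ω)
        * Set.indicator {ω' | epoch K i ω' ≤ t} (fun _ => (1 : ℝ≥0∞)) ω
      ≤ ∑' i : ℕ, ENNReal.ofReal (K i ω) := by
        refine ENNReal.tsum_le_tsum fun i => ?_
        exact mul_le_of_le_one_right zero_le (Set.indicator_le_self' (fun _ _ => zero_le_one) ω)
    _ ≤ ENNReal.ofReal t := by
        rw [ENNReal.tsum_eq_iSup_nat]
        refine iSup_le fun n => ?_
        rw [← ENNReal.ofReal_sum_of_nonneg (fun i _ => hK i ω)]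
        exact ENNReal.ofReal_le_ofReal (h n)

/-- Upper bound: `∑_i K_i 1_{T_i ≤ t} ≤ t + b` when all jumps are bounded by `b`. -/
lemma W_le {K : ℕ → Ω → ℝ} (hK : ∀ i ω, 0 ≤ K i ω) {b : ℝ} (hb : 0 ≤ b)
    (hKb : ∀ i ω, K i ω ≤ b) {t : ℝ} (ht : 0 ≤ t) (ω : Ω) :
    ∑' i : ℕ, ENNReal.ofReal (K i ω)
        * Set.indicator {ω' | epoch K i ω' ≤ t} (fun _ => (1 : ℝ≥0∞)) ω
      ≤ ENNReal.ofReal (t + b) := by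
  by_cases h : ∃ n, ¬ epoch K n ω ≤ t
  · obtain ⟨m, hm⟩ := exists_seg hK ht h
    rw [W_eq_of_seg hK hm]
    refine ENNReal.ofReal_le_ofReal ?_
    have h1 : epoch K (m + 1) ω = epoch K m ω + K m ω := Finset.sum_range_succ _ _
    rw [h1]
    exact add_le_add ((hm m).2 le_rfl) (hKb m ω)
  · push_neg at h
    exact le_trans (W_le_of_all hK h) (ENNReal.ofReal_le_ofReal (by linarith))

/-- Lower bound: `∑_i K_i 1_{T_i ≤ t} ≥ t` when some epoch exceeds `t`. -/
lemma W_ge {K : ℕ → Ω → ℝ} (hK : ∀ i ω, 0 ≤ K i ω) {ω : Ω} {t : ℝ} (ht : 0 ≤ t)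
    (h : ∃ n, ¬ epoch K n ω ≤ t) :
    ENNReal.ofReal t
      ≤ ∑' i : ℕ, ENNReal.ofReal (K i ω)
          * Set.indicator {ω' | epoch K i ω' ≤ t} (fun _ => (1 : ℝ≥0∞)) ω := by
  obtain ⟨m, hm⟩ := exists_seg hK ht h
  rw [W_eq_of_seg hK hm]
  refine ENNReal.ofReal_le_ofReal ?_
  have := (hm (m + 1)).not.mpr (by omega)
  push_neg at this
  exact this.le

end Helpers4

section Wald

variable {Ω : Type*} [MeasureSpace Ω] [IsProbabilityMeasure (ℙ : Measure Ω)]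

/-- Wald's identity in `ℝ≥0∞` form. -/
lemma wald {K : ℕ → Ω → ℝ} (hKm : ∀ i, Measurable (K i))
    (hK : ∀ i ω, 0 ≤ K i ω)
    (hKindep : iIndepFun K ℙ)
    (hKid : ∀ i, IdentDistrib (K i) (K 0) ℙ ℙ) {t : ℝ} (ht : 0 ≤ t) :
    ∫⁻ ω, ∑' i : ℕ, ENNReal.ofReal (K i ω)
        * Set.indicator {ω' | epoch K i ω' ≤ t} (fun _ => (1 : ℝ≥0∞)) ω ∂ℙ
      = (∫⁻ ω, ENNReal.ofReal (K 0 ω) ∂ℙ)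
          * ((∫⁻ ω, (countingProcess K t ω : ℝ≥0∞) ∂ℙ) + 1) := by
  rw [lintegral_tsum (f := fun i ω => ENNReal.ofReal (K i ω)
      * Set.indicator {ω' | epoch K i ω' ≤ t} (fun _ => (1 : ℝ≥0∞)) ω) (fun i => (((hKm i).ennreal_ofReal).mul
    (indicator_measurable hKm t i)).aemeasurable)]
  have hterm : ∀ i : ℕ, ∫⁻ ω, ENNReal.ofReal (K i ω)
      * Set.indicator {ω' | epoch K i ω' ≤ t} (fun _ => (1 : ℝ≥0∞)) ω ∂ℙ
      = (∫⁻ ω, ENNReal.ofReal (K 0 ω) ∂ℙ) * ℙ {ω | epoch K i ω ≤ t} := by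
    intro i
    -- independence of `K i` and `T_i`
    have hbase : IndepFun (∑ j ∈ Finset.range i, K j) (K i) ℙ :=
      hKindep.indepFun_finsetSum_of_notMem hKm (Finset.notMem_range_self)
    have hcomp : IndepFun (fun ω => ENNReal.ofReal (K i ω))
        (fun ω => Set.indicator {ω' | epoch K i ω' ≤ t} (fun _ => (1 : ℝ≥0∞)) ω) ℙ := by
      have := hbase.symm.comp (φ := ENNReal.ofReal)
        (ψ := fun x : ℝ => Set.indicator (Set.Iic t) (fun _ => (1 : ℝ≥0∞)) x)
        (_mγ := ENNReal.measurableSpace) (_mγ' := ENNReal.measurableSpace)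
        ENNReal.measurable_ofReal
        (measurable_const.indicator measurableSet_Iic)
      have heq : (fun x : ℝ => Set.indicator (Set.Iic t) (fun _ => (1 : ℝ≥0∞)) x)
          ∘ (∑ j ∈ Finset.range i, K j)
          = fun ω => Set.indicator {ω' | epoch K i ω' ≤ t} (fun _ => (1 : ℝ≥0∞)) ω := by
        funext ω
        have hsum : (∑ j ∈ Finset.range i, K j) ω = epoch K i ω := by
          simp [epoch, Finset.sum_apply]
        by_cases hω : epoch K i ω ≤ t <;>
          simp [Function.comp_apply, hsum, Set.indicator_apply, Set.mem_Iic,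
            Set.mem_setOf_eq, hω]
      rwa [heq] at this
    rw [lintegral_mul_eq_lintegral_mul_lintegral_of_indepFun''
      ((hKm i).ennreal_ofReal).aemeasurable (indicator_measurable hKm t i).aemeasurable hcomp]
    congr 1
    · exact ((hKid i).comp ENNReal.measurable_ofReal).lintegral_eq
    · rw [lintegral_indicator (measurableSet_le (epoch_measurable K hKm i) measurable_const),
        setLIntegral_one]
  rw [tsum_congr hterm, ENNReal.tsum_mul_left, ← lintegral_counting hKm hK ht]

end Wald

section Mono

variable {Ω : Type*} [MeasureSpace Ω]

lemma countingProcess_mono {K J : ℕ → Ω → ℝ} (h : ∀ i ω, K i ω ≤ J i ω) (t : ℝ) (ω : Ω) :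
    countingProcess J t ω ≤ countingProcess K t ω := by
  unfold countingProcess
  refine iSup₂_le fun n hn => ?_
  refine le_iSup₂ (f := fun (n : ℕ) (_ : epoch K n ω ≤ t) => (n : ℕ∞)) n ?_
  exact le_trans (Finset.sum_le_sum fun i _ => h i ω) hn

end Mono

theorem elementary_renewal_theorem' {Ω : Type*} [MeasureSpace Ω]
    [IsProbabilityMeasure (ℙ : Measure Ω)]
    (J : ℕ → Ω → ℝ)
    (hmeas : ∀ i, Measurable (J i))
    (hindep : iIndepFun J ℙ)
    (hident : ∀ i, IdentDistrib (J i) (J 0) ℙ ℙ)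
    (hpos : ∀ i ω, 0 < J i ω)
    (hint : Integrable (J 0) ℙ)
    (μ : ℝ) (hμ : μ = ∫ ω, J 0 ω ∂ℙ) (hμ_pos : 0 < μ)
    (hfin : ∀ t : ℝ, ∫⁻ ω, (countingProcess J t ω : ℝ≥0∞) ∂ℙ ≠ ⊤) :
    Tendsto (fun t : ℝ => renewalFunction J t / t) atTop (nhds (1 / μ)) := by
  classical
  have hJnn : ∀ i ω, 0 ≤ J i ω := fun i ω => (hpos i ω).le
  set G : ℝ → ℝ≥0∞ := fun t => ∫⁻ ω, (countingProcess J t ω : ℝ≥0∞) ∂ℙ with hG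
  have hμ' : (∫⁻ ω, ENNReal.ofReal (J 0 ω) ∂ℙ) = ENNReal.ofReal μ := by
    rw [hμ]
    exact (ofReal_integral_eq_lintegral_ofReal hint (ae_of_all _ fun ω => hJnn 0 ω)).symm
  -- Lower bound: t ≤ μ * (H t + 1) for t ≥ 0
  have hlow : ∀ t : ℝ, 0 ≤ t → ENNReal.ofReal t ≤ ENNReal.ofReal μ * (G t + 1) := by
    intro t ht
    have hae : ∀ᵐ ω ∂ℙ, ∃ n, ¬ epoch J n ω ≤ t := by
      filter_upwards [ae_lt_top (counting_measurable hmeas hJnn ht) (hfin t)] with ω hω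
      by_contra hcon
      push_neg at hcon
      rw [countingProcess_eq_top hcon, ENat.toENNReal_top] at hω
      exact (lt_irrefl _ hω)
    calc ENNReal.ofReal t = ∫⁻ (_ : Ω), ENNReal.ofReal t ∂ℙ := by
          rw [lintegral_const, measure_univ, mul_one]
      _ ≤ ∫⁻ ω, ∑' i : ℕ, ENNReal.ofReal (J i ω)
            * Set.indicator {ω' | epoch J i ω' ≤ t} (fun _ => (1 : ℝ≥0∞)) ω ∂ℙ := by
          refine lintegral_mono_ae ?_
          filter_upwards [hae] with ω hω
          exact W_ge hJnn ht hω
      _ = ENNReal.ofReal μ * (G t + 1) := by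
          rw [wald hmeas hJnn hindep hident ht, hμ']
  -- Truncated sequences
  have main : ∀ b : ℕ, 0 < b → ∀ t : ℝ, 0 ≤ t →
      (∫⁻ ω, ENNReal.ofReal (min (J 0 ω) b) ∂ℙ) * (G t + 1) ≤ ENNReal.ofReal (t + b) := by
    intro b hb t ht
    set K : ℕ → Ω → ℝ := fun i ω => min (J i ω) b with hK
    have hKm : ∀ i, Measurable (K i) := fun i => (hmeas i).min measurable_const
    have hKnn : ∀ i ω, 0 ≤ K i ω := fun i ω =>
      le_min (hJnn i ω) (by exact_mod_cast hb.le)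
    have hKindep : iIndepFun K ℙ :=
      hindep.comp (fun _ x => min x b) (fun i => measurable_id.min measurable_const)
    have hKid : ∀ i, IdentDistrib (K i) (K 0) ℙ ℙ := fun i =>
      (hident i).comp (measurable_id.min measurable_const)
    have hKb : ∀ i ω, K i ω ≤ b := fun i ω => min_le_right _ _
    have h2 : (∫⁻ ω, ENNReal.ofReal (K 0 ω) ∂ℙ)
        * ((∫⁻ ω, (countingProcess K t ω : ℝ≥0∞) ∂ℙ) + 1) ≤ ENNReal.ofReal (t + b) := by
      rw [← wald hKm hKnn hKindep hKid ht]
      calc ∫⁻ ω, ∑' i : ℕ, ENNReal.ofReal (K i ω)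
            * Set.indicator {ω' | epoch K i ω' ≤ t} (fun _ => (1 : ℝ≥0∞)) ω ∂ℙ
          ≤ ∫⁻ (_ : Ω), ENNReal.ofReal (t + b) ∂ℙ :=
            lintegral_mono fun ω => W_le hKnn (by exact_mod_cast hb.le) hKb ht ω
        _ = ENNReal.ofReal (t + b) := by rw [lintegral_const, measure_univ, mul_one]
    have h3 : G t ≤ ∫⁻ ω, (countingProcess K t ω : ℝ≥0∞) ∂ℙ := by
      refine lintegral_mono fun ω => ?_
      exact ENat.toENNReal_le.2 (countingProcess_mono (fun i ω => min_le_left _ _) t ω)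
    calc (∫⁻ ω, ENNReal.ofReal (K 0 ω) ∂ℙ) * (G t + 1)
        ≤ (∫⁻ ω, ENNReal.ofReal (K 0 ω) ∂ℙ)
            * ((∫⁻ ω, (countingProcess K t ω : ℝ≥0∞) ∂ℙ) + 1) := by
          exact mul_le_mul_right (add_le_add h3 le_rfl) _
      _ ≤ ENNReal.ofReal (t + b) := h2
  -- supremum of truncated means
  have hsup : (⨆ b : ℕ, ∫⁻ ω, ENNReal.ofReal (min (J 0 ω) b) ∂ℙ) = ENNReal.ofReal μ := by
    rw [← hμ']
    rw [← lintegral_iSup (fun b => (hmeas 0).min measurable_const |>.ennreal_ofReal)]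
    · refine lintegral_congr fun ω => ?_
      apply le_antisymm
      · exact iSup_le fun b => ENNReal.ofReal_le_ofReal (min_le_left _ _)
      · refine le_trans (le_of_eq ?_) (le_iSup _ (⌈J 0 ω⌉₊))
        rw [min_eq_left (Nat.le_ceil _)]
    · intro m n hmn ω
      exact ENNReal.ofReal_le_ofReal (min_le_min le_rfl (by exact_mod_cast hmn))
  -- convert to real inequalities
  have hHnn : ∀ t, 0 ≤ renewalFunction J t := fun t => ENNReal.toReal_nonneg
  have hGH : ∀ t, G t = ENNReal.ofReal (renewalFunction J t) := fun t =>
    (ENNReal.ofReal_toReal (hfin t)).symm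
  have hlowR : ∀ t : ℝ, 0 ≤ t → t ≤ μ * (renewalFunction J t + 1) := by
    intro t ht
    have h := hlow t ht
    rw [hGH t, ← ENNReal.ofReal_one, ← ENNReal.ofReal_add (hHnn t) zero_le_one,
      ← ENNReal.ofReal_mul hμ_pos.le] at h
    exact (ENNReal.ofReal_le_ofReal_iff (mul_nonneg hμ_pos.le (by linarith [hHnn t]))).1 h
  rw [Metric.tendsto_nhds]
  intro ε hε
  -- choose the truncation level
  set c : ℝ := 1 / (1 / μ + ε / 2) with hc
  have hc_pos : 0 < c := by positivity
  have hc_lt : c < μ := by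
    have h1 : (1:ℝ)/μ < 1/μ + ε/2 := by linarith
    calc c < 1 / (1/μ) := by
          exact one_div_lt_one_div_of_lt (by positivity) h1
      _ = μ := one_div_one_div μ
  obtain ⟨b, hb⟩ : ∃ b : ℕ, ENNReal.ofReal c
      < ∫⁻ ω, ENNReal.ofReal (min (J 0 ω) b) ∂ℙ := by
    rw [← lt_iSup_iff (f := fun b : ℕ => ∫⁻ ω, ENNReal.ofReal (min (J 0 ω) b) ∂ℙ), hsup]
    exact (ENNReal.ofReal_lt_ofReal_iff hμ_pos).2 hc_lt
  have hb' : ENNReal.ofReal c < ∫⁻ ω, ENNReal.ofReal (min (J 0 ω) (b + 1 : ℕ)) ∂ℙ :=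
    lt_of_lt_of_le hb (lintegral_mono fun ω => ENNReal.ofReal_le_ofReal
      (min_le_min le_rfl (by exact_mod_cast Nat.le_succ b)))
  have hfin' : (∫⁻ ω, ENNReal.ofReal (min (J 0 ω) (b + 1 : ℕ)) ∂ℙ) ≠ ⊤ := by
    refine ne_top_of_le_ne_top ENNReal.ofReal_ne_top (le_trans
      (lintegral_mono fun ω => ENNReal.ofReal_le_ofReal (min_le_left _ _)) hμ'.le)
  set mb : ℝ := (∫⁻ ω, ENNReal.ofReal (min (J 0 ω) (b + 1 : ℕ)) ∂ℙ).toReal with hmb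
  have hmb_eq : (∫⁻ ω, ENNReal.ofReal (min (J 0 ω) (b + 1 : ℕ)) ∂ℙ) = ENNReal.ofReal mb :=
    (ENNReal.ofReal_toReal hfin').symm
  have hmb_gt : c < mb := by
    rw [hmb_eq] at hb'
    exact (ENNReal.ofReal_lt_ofReal_iff_of_nonneg hc_pos.le).1 hb'
  have hmb_pos : 0 < mb := hc_pos.trans hmb_gt
  have hupR : ∀ t : ℝ, 0 ≤ t → mb * (renewalFunction J t + 1) ≤ t + (b + 1 : ℕ) := by
    intro t ht
    have h := main (b + 1) (Nat.succ_pos b) t ht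
    rw [hmb_eq, hGH t, ← ENNReal.ofReal_one, ← ENNReal.ofReal_add (hHnn t) zero_le_one,
      ← ENNReal.ofReal_mul hmb_pos.le] at h
    exact (ENNReal.ofReal_le_ofReal_iff (by positivity)).1 h
  have hinv0 : Tendsto (fun t : ℝ => 1 / t) atTop (nhds (0:ℝ)) := by
    simpa using tendsto_inv_atTop_zero (𝕜 := ℝ)
  -- lower eventual bound
  have hev1 : ∀ᶠ t : ℝ in atTop, 1 / μ - renewalFunction J t / t < ε := by
    filter_upwards [eventually_gt_atTop (0:ℝ),
      hinv0.eventually_lt_const hε] with t ht0 hinvt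
    have h1 : t / μ - 1 ≤ renewalFunction J t := by
      have := hlowR t ht0.le
      rw [div_sub_one hμ_pos.ne', div_le_iff₀ hμ_pos]
      linarith [this]
    have h2 : 1 / μ - 1 / t ≤ renewalFunction J t / t := by
      have heq : 1 / μ - 1 / t = (t / μ - 1) / t := by
        field_simp
      rw [heq]
      gcongr
    linarith [h2, hinvt]
  -- upper eventual bound
  have hev2 : ∀ᶠ t : ℝ in atTop, renewalFunction J t / t - 1 / μ < ε := by
    have hmb_inv : 1 / mb < 1 / μ + ε / 2 := by
      have := one_div_lt_one_div_of_lt hc_pos hmb_gt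
      rwa [hc, one_div_one_div] at this
    have htend : Tendsto (fun t : ℝ => ((b:ℝ) + 1) / mb * (1 / t)) atTop (nhds 0) := by
      simpa using hinv0.const_mul (((b:ℝ) + 1) / mb)
    filter_upwards [eventually_gt_atTop (0:ℝ),
      htend.eventually_lt_const (half_pos hε)] with t ht0 hsmall
    have h1 : renewalFunction J t ≤ (t + ((b:ℝ) + 1)) / mb := by
      rw [le_div_iff₀ hmb_pos]
      have := hupR t ht0.le
      push_cast at this
      nlinarith [hHnn t]
    have h2 : renewalFunction J t / t ≤ 1 / mb + ((b:ℝ) + 1) / mb * (1 / t) := by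
      have heq : (1:ℝ) / mb + ((b:ℝ) + 1) / mb * (1 / t) = ((t + ((b:ℝ) + 1)) / mb) / t := by
        field_simp
      rw [heq]
      gcongr
    have : renewalFunction J t / t < 1 / μ + ε / 2 + ε / 2 := by linarith
    linarith
  filter_upwards [hev1, hev2] with t h1 h2
  rw [Real.dist_eq, abs_sub_lt_iff]
  exact ⟨h2, h1⟩


/-- Elementary renewal theorem: if `J_1, J_2, …` are i.i.d. strictly positive
integrable random variables with mean `μ = E[J_1] ∈ (0,∞)` and `H(t) = E[N(t)]`
(finite for every `t`), then `H(t)/t → 1/μ` as `t → ∞`. -/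
theorem elementary_renewal_theorem {Ω : Type*} [MeasureSpace Ω]
    [IsProbabilityMeasure (ℙ : Measure Ω)]
    (J : ℕ → Ω → ℝ)
    (hmeas : ∀ i, Measurable (J i))
    (hindep : iIndepFun J ℙ)
    (hident : ∀ i, IdentDistrib (J i) (J 0) ℙ ℙ)
    (hpos : ∀ i ω, 0 < J i ω)
    (hint : Integrable (J 0) ℙ)
    (μ : ℝ) (hμ : μ = ∫ ω, J 0 ω ∂ℙ) (hμ_pos : 0 < μ)
    (hfin : ∀ t : ℝ, ∫⁻ ω, (countingProcess J t ω : ℝ≥0∞) ∂ℙ ≠ ⊤) :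
    Tendsto (fun t : ℝ => renewalFunction J t / t) atTop (nhds (1 / μ)) := elementary_renewal_theorem'
    J hmeas hindep hident hpos hint μ hμ hμ_pos hfin
end
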